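/- Let k be a Mercer kernel on ℤ≥0 with RKHS H. Then H is contained in ℓ¹(ℤ≥0) (i.e. every g ∈ H satisfies Σ_{t∈ℤ≥0} |g(t)| < ∞) if and only if for every bounded sequence u : ℤ≥0 → ℝ one has Σ_{t∈ℤ≥0} | Σ_{s∈ℤ≥0} u(s) k(t,s) | < ∞. -/

import Mathlib

open scoped InnerProductSpace

/-- For a Mercer kernel `k` on `ℤ≥0` with RKHS `H`, the inclusion
`H ⊆ ℓ¹(ℤ≥0)` holds iff for every bounded `u : ℕ → ℝ` the double expression
`∑_t |∑_s u s * k t s|` is finite. -/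
theorem stmt_0
    {H : Type*} [NormedAddCommGroup H] [InnerProductSpace ℝ H] [CompleteSpace H]
    (k : ℕ → ℕ → ℝ)
    (hsymm : ∀ s t, k s t = k t s)
    (hpsd : ∀ (n : ℕ) (t : Fin n → ℕ) (a : Fin n → ℝ),
      0 ≤ ∑ i, ∑ j, a i * a j * k (t i) (t j))
    (ι : H →ₗ[ℝ] (ℕ → ℝ)) (hι : Function.Injective ι)
    (K : ℕ → H) (hK : ∀ t s, ι (K t) s = k t s)
    (hrep : ∀ (g : H) (t : ℕ), ⟪g, K t⟫_ℝ = ι g t) :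
    (∀ g : H, Summable fun t => |ι g t|) ↔
      (∀ u : ℕ → ℝ, (∃ C, ∀ s, |u s| ≤ C) →
        (∀ t, Summable fun s => u s * k t s) ∧
          Summable fun t => |∑' s, u s * k t s|) := by
  constructor
  · -- Forward direction: H ⊆ ℓ¹ implies the condition.
    intro hl1 u hu
    obtain ⟨C, hC⟩ := hu
    have hC0 : (0:ℝ) ≤ C := le_trans (abs_nonneg _) (hC 0)
    -- every g has u • (ι g) absolutely summable
    have habs : ∀ g : H, Summable fun t => |u t * ι g t| := by
      intro g
      refine Summable.of_nonneg_of_le (fun t => abs_nonneg _) (fun t => ?_)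
        ((hl1 g).mul_left C)
      rw [abs_mul]
      exact mul_le_mul_of_nonneg_right (hC t) (abs_nonneg _)
    have hsummul : ∀ g : H, Summable fun t => u t * ι g t := fun g => (habs g).of_abs
    have ha : ∀ t, Summable fun s => u s * k t s := by
      intro t
      have := hsummul (K t)
      simpa only [hK] using this
    refine ⟨ha, ?_⟩
    -- the family of partial-sum functionals
    set φ : Finset ℕ → (H →L[ℝ] ℝ) := fun F => innerSL ℝ (∑ t ∈ F, u t • K t) with hφdef
    have hφ_apply : ∀ (F : Finset ℕ) (g : H), φ F g = ∑ t ∈ F, u t * ι g t := by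
      intro F g
      have : φ F g = ⟪∑ t ∈ F, u t • K t, g⟫_ℝ := rfl
      rw [this, sum_inner]
      refine Finset.sum_congr rfl fun t _ => ?_
      rw [real_inner_smul_left, real_inner_comm, hrep]
    -- pointwise boundedness
    have hpt : ∀ g : H, ∃ Cg, ∀ F, ‖φ F g‖ ≤ Cg := by
      intro g
      refine ⟨∑' t, |u t * ι g t|, fun F => ?_⟩
      rw [Real.norm_eq_abs, hφ_apply]
      refine le_trans (Finset.abs_sum_le_sum_abs _ _) ?_
      exact (habs g).sum_le_tsum F (fun t _ => abs_nonneg _)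
    obtain ⟨M, hM⟩ := banach_steinhaus hpt
    -- the limiting functional
    have hbd : ∀ g : H, ‖∑' t, u t * ι g t‖ ≤ M * ‖g‖ := by
      intro g
      have htend : Filter.Tendsto (fun F : Finset ℕ => ∑ t ∈ F, u t * ι g t)
          Filter.atTop (nhds (∑' t, u t * ι g t)) := (hsummul g).hasSum
      have habs' : Filter.Tendsto (fun F : Finset ℕ => ‖∑ t ∈ F, u t * ι g t‖)
          Filter.atTop (nhds ‖∑' t, u t * ι g t‖) := htend.norm
      refine le_of_tendsto habs' (Filter.Eventually.of_forall fun F => ?_)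
      have := (φ F).le_opNorm g
      rw [hφ_apply] at this
      exact le_trans this (mul_le_mul_of_nonneg_right (hM F) (norm_nonneg g))
    let Φlin : H →ₗ[ℝ] ℝ :=
      { toFun := fun g => ∑' t, u t * ι g t
        map_add' := by
          intro x y
          simp only [map_add, Pi.add_apply, mul_add]
          exact (hsummul x).tsum_add (hsummul y)
        map_smul' := by
          intro c x
          simp only [map_smul, Pi.smul_apply, smul_eq_mul, RingHom.id_apply]
          rw [← tsum_mul_left]
          exact tsum_congr fun t => by ring }
    let Φ : H →L[ℝ] ℝ := LinearMap.mkContinuous Φlin M hbd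
    set h : H := (InnerProductSpace.toDual ℝ H).symm Φ with hh
    have hrep' : ∀ t, ι h t = ∑' s, u s * k t s := by
      intro t
      have h1 : ⟪h, K t⟫_ℝ = Φ (K t) := InnerProductSpace.toDual_symm_apply
      rw [hrep h t] at h1
      rw [h1]
      show (∑' s, u s * ι (K t) s) = ∑' s, u s * k t s
      exact tsum_congr fun s => by rw [hK]
    have := hl1 h
    refine this.congr fun t => ?_
    rw [hrep' t]
  · -- Reverse direction.
    intro hyp g
    -- columns of k are absolutely summable
    have hcol : ∀ t, Summable fun s => |k t s| := by
      intro t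
      have h2 := (hyp (fun s => if s = t then 1 else 0)
        ⟨1, fun s => by by_cases hs : s = t <;> simp [hs]⟩).2
      have key : ∀ t', (∑' s, (if s = t then (1:ℝ) else 0) * k t' s) = k t' t := by
        intro t'
        have : (fun s => (if s = t then (1:ℝ) else 0) * k t' s)
            = fun s => if s = t then k t' t else 0 := by
          funext s
          by_cases hs : s = t
          · subst hs; simp
          · simp [hs]
        rw [this, tsum_ite_eq]
      simp only [key] at h2
      have : (fun s => |k t s|) = fun s => |k s t| := funext fun s => by rw [hsymm]
      rw [this]
      exact h2
    -- sign sequence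
    set ε : ℕ → ℝ := fun t => if 0 ≤ ι g t then 1 else -1 with hε
    have hε1 : ∀ t, |ε t| = 1 := by
      intro t; simp only [hε]; split <;> simp
    have hεg : ∀ t, ε t * ι g t = |ι g t| := by
      intro t
      simp only [hε]
      split_ifs with h0
      · rw [one_mul, abs_of_nonneg h0]
      · rw [abs_of_neg (lt_of_not_ge h0)]; ring
    -- the per-point functionals on ℓ∞
    have hsummand : ∀ (t : ℕ) (v : lp (fun _ : ℕ => ℝ) ⊤),
        Summable fun s => v s * k t s := by
      intro t v
      refine Summable.of_abs (Summable.of_nonneg_of_le (fun s => abs_nonneg _)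
        (fun s => ?_) ((hcol t).mul_left ‖v‖))
      rw [abs_mul]
      exact mul_le_mul_of_nonneg_right
        (lp.norm_apply_le_norm ENNReal.top_ne_zero v s) (abs_nonneg _)
    have habsv : ∀ (t : ℕ) (v : lp (fun _ : ℕ => ℝ) ⊤),
        Summable fun s => |(v : ℕ → ℝ) s * k t s| := by
      intro t v
      refine Summable.of_nonneg_of_le (fun s => abs_nonneg _) (fun s => ?_)
        ((hcol t).mul_left ‖v‖)
      rw [abs_mul]
      exact mul_le_mul_of_nonneg_right
        (lp.norm_apply_le_norm ENNReal.top_ne_zero v s) (abs_nonneg _)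
    let Llin : ℕ → (lp (fun _ : ℕ => ℝ) ⊤ →ₗ[ℝ] ℝ) := fun t =>
      { toFun := fun v => ∑' s, v s * k t s
        map_add' := by
          intro x y
          have h : ∀ s, ((x + y : lp (fun _ : ℕ => ℝ) ⊤)) s * k t s
              = x s * k t s + y s * k t s := by
            intro s
            rw [lp.coeFn_add, Pi.add_apply, add_mul]
          exact (tsum_congr h).trans ((hsummand t x).tsum_add (hsummand t y))
        map_smul' := by
          intro c x
          have h : ∀ s, ((c • x : lp (fun _ : ℕ => ℝ) ⊤)) s * k t s
              = c * (x s * k t s) := by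
            intro s
            rw [lp.coeFn_smul, Pi.smul_apply, smul_eq_mul, mul_assoc]
          exact (tsum_congr h).trans tsum_mul_left }
    have hLbd : ∀ (t : ℕ) (v : lp (fun _ : ℕ => ℝ) ⊤),
        ‖Llin t v‖ ≤ (∑' s, |k t s|) * ‖v‖ := by
      intro t v
      have h1 : ‖Llin t v‖ ≤ ∑' s, |(v : ℕ → ℝ) s * k t s| := by
        have := norm_tsum_le_tsum_norm (f := fun s => (v : ℕ → ℝ) s * k t s)
          (by simpa only [Real.norm_eq_abs] using habsv t v)
        simp only [Real.norm_eq_abs] at this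
        exact this
      refine h1.trans ?_
      rw [← tsum_mul_right]
      refine (habsv t v).tsum_le_tsum (fun s => ?_) ((hcol t).mul_right ‖v‖)
      rw [abs_mul, mul_comm]
      exact mul_le_mul_of_nonneg_left
        (lp.norm_apply_le_norm ENNReal.top_ne_zero v s) (abs_nonneg _)
    let L : ℕ → (lp (fun _ : ℕ => ℝ) ⊤ →L[ℝ] ℝ) := fun t =>
      LinearMap.mkContinuous (Llin t) (∑' s, |k t s|) (hLbd t)
    have hLapp : ∀ (t : ℕ) (v : lp (fun _ : ℕ => ℝ) ⊤),
        L t v = ∑' s, v s * k t s := fun _ _ => rfl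
    -- the family for Banach–Steinhaus
    let T : Finset ℕ → (lp (fun _ : ℕ => ℝ) ⊤ →L[ℝ] ℝ) := fun F =>
      ∑ t ∈ F, ε t • L t
    have hTapp : ∀ (F : Finset ℕ) (v : lp (fun _ : ℕ => ℝ) ⊤),
        T F v = ∑ t ∈ F, ε t * (∑' s, v s * k t s) := by
      intro F v
      simp only [T, ContinuousLinearMap.sum_apply, ContinuousLinearMap.smul_apply,
        smul_eq_mul, hLapp]
    have hpt : ∀ v : lp (fun _ : ℕ => ℝ) ⊤, ∃ Cv, ∀ F, ‖T F v‖ ≤ Cv := by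
      intro v
      have hv : ∃ C, ∀ s, |(v : ℕ → ℝ) s| ≤ C :=
        ⟨‖v‖, fun s => lp.norm_apply_le_norm ENNReal.top_ne_zero v s⟩
      obtain ⟨-, hsum2⟩ := hyp v hv
      refine ⟨∑' t, |∑' s, v s * k t s|, fun F => ?_⟩
      rw [Real.norm_eq_abs, hTapp]
      refine le_trans (Finset.abs_sum_le_sum_abs _ _) ?_
      refine le_trans (le_of_eq ?_) (hsum2.sum_le_tsum F (fun t _ => abs_nonneg _))
      refine Finset.sum_congr rfl fun t _ => ?_
      rw [abs_mul, hε1, one_mul]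
    obtain ⟨M, hM⟩ := banach_steinhaus hpt
    have hM0 : (0:ℝ) ≤ M := le_trans (norm_nonneg _) (hM ∅)
    -- the partial-sum vectors in H
    have hnorm_sq : ∀ F : Finset ℕ, ‖∑ t ∈ F, ε t • K t‖ ^ 2 ≤ M := by
      intro F
      -- the truncated sign vector in ℓ∞
      have hmem : Memℓp (fun s => if s ∈ F then ε s else 0) ⊤ := by
        apply memℓp_infty
        refine ⟨1, ?_⟩
        rintro x ⟨s, rfl⟩
        simp only [Real.norm_eq_abs]
        split
        · exact le_of_eq (hε1 s)
        · simp
      set vF : lp (fun _ : ℕ => ℝ) ⊤ := ⟨fun s => if s ∈ F then ε s else 0, hmem⟩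
      have hvF_norm : ‖vF‖ ≤ 1 := by
        refine lp.norm_le_of_forall_le zero_le_one fun s => ?_
        have : (vF : ℕ → ℝ) s = if s ∈ F then ε s else 0 := rfl
        rw [Real.norm_eq_abs, this]
        split
        · exact le_of_eq (hε1 s)
        · simp
      have hinner : ∀ t, (∑' s, vF s * k t s) = ∑ s ∈ F, ε s * k t s := by
        intro t
        have h0 : ∀ s ∉ F, (vF : ℕ → ℝ) s * k t s = 0 := by
          intro s hs
          have : (vF : ℕ → ℝ) s = if s ∈ F then ε s else 0 := rfl
          rw [this, if_neg hs, zero_mul]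
        rw [tsum_eq_sum h0]
        refine Finset.sum_congr rfl fun s hs => ?_
        have : (vF : ℕ → ℝ) s = if s ∈ F then ε s else 0 := rfl
        rw [this, if_pos hs]
      have hTv : T F vF = ∑ t ∈ F, ∑ s ∈ F, ε t * ε s * k t s := by
        rw [hTapp]
        refine Finset.sum_congr rfl fun t _ => ?_
        rw [hinner, Finset.mul_sum]
        exact Finset.sum_congr rfl fun s _ => by ring
      have hns : ‖∑ t ∈ F, ε t • K t‖ ^ 2 = T F vF := by
        rw [hTv, ← real_inner_self_eq_norm_sq, sum_inner]
        refine Finset.sum_congr rfl fun t _ => ?_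
        rw [inner_sum]
        refine Finset.sum_congr rfl fun s _ => ?_
        rw [real_inner_smul_left, real_inner_smul_right, hrep (K t) s, hK]
        ring
      rw [hns]
      calc T F vF ≤ |T F vF| := le_abs_self _
        _ = ‖T F vF‖ := (Real.norm_eq_abs _).symm
        _ ≤ ‖T F‖ * ‖vF‖ := (T F).le_opNorm vF
        _ ≤ M * 1 := mul_le_mul (hM F) hvF_norm (norm_nonneg _) hM0
        _ = M := mul_one M
    -- partial sums of |ι g t| are uniformly bounded
    have hpartial : ∀ F : Finset ℕ, ∑ t ∈ F, |ι g t| ≤ ‖g‖ * Real.sqrt M := by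
      intro F
      have h1 : ∑ t ∈ F, |ι g t| = ⟪g, ∑ t ∈ F, ε t • K t⟫_ℝ := by
        rw [inner_sum]
        refine Finset.sum_congr rfl fun t _ => ?_
        rw [real_inner_smul_right, hrep, hεg]
      rw [h1]
      refine le_trans (real_inner_le_norm _ _) ?_
      refine mul_le_mul_of_nonneg_left ?_ (norm_nonneg g)
      exact Real.le_sqrt_of_sq_le (hnorm_sq F)
    exact summable_of_sum_le (fun t => abs_nonneg _) hpartial
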